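/- Fix y ∈ ℝⁿ, X ∈ ℝ^{n×p} and λ > 0, and let ℓ, ℓ' ∈ {0,1,…,p} with ℓ < ℓ'. If β* is an optimal solution to both (TL_{λ,ℓ}) and (TL_{λ,ℓ'}), then ‖β*‖₀ ≤ ℓ, and β* is an optimal solution to (TL_{λ,j}) for every integer j with ℓ < j < ℓ'. -/

import Mathlib

open Finset

/-- Absolute values of the entries of `β`, sorted in increasing order. -/
noncomputable def sortAbs {p : ℕ} (β : Fin p → ℝ) : Fin p → ℝ :=
  fun i => |β (Tuple.sort (fun j => |β j|) i)|

/-- The trimmed Lasso penalty `T_k(β)`: sum of the `p - k` smallest `|β_i|`. -/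
noncomputable def trimmedLasso {p : ℕ} (k : ℕ) (β : Fin p → ℝ) : ℝ :=
  ∑ i ∈ Finset.univ.filter (fun i : Fin p => (i : ℕ) < p - k), sortAbs β i

/-- `‖β‖₀`: the number of nonzero entries of `β`. -/
noncomputable def l0 {p : ℕ} (β : Fin p → ℝ) : ℕ :=
  (Finset.univ.filter (fun i => β i ≠ 0)).card

/-- The objective of the trimmed Lasso problem `(TL_{λ,k})`. -/
noncomputable def tlObj {n p : ℕ} (y : Fin n → ℝ) (X : Matrix (Fin n) (Fin p) ℝ)
    (lam : ℝ) (k : ℕ) (β : Fin p → ℝ) : ℝ :=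
  (1 / 2) * (∑ i, (y i - X.mulVec β i) ^ 2) + lam * trimmedLasso k β

lemma sortAbs_monotone {p : ℕ} (β : Fin p → ℝ) : Monotone (sortAbs β) :=
  Tuple.monotone_sort (fun j => |β j|)

lemma filter_lt_eq_map {p m : ℕ} (h : m ≤ p) :
    (univ.filter fun i : Fin p => (i : ℕ) < m) =
      univ.map (Fin.castLEEmb h) := by
  ext j
  simp only [mem_filter, mem_univ, true_and, mem_map, Fin.castLEEmb_apply]
  constructor
  · intro hj; exact ⟨⟨(j : ℕ), hj⟩, rfl⟩
  · rintro ⟨a, rfl⟩; exact a.2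

lemma card_filter_lt {p m : ℕ} (h : m ≤ p) :
    (univ.filter fun i : Fin p => (i : ℕ) < m).card = m := by
  rw [filter_lt_eq_map h, Finset.card_map, Finset.card_univ, Fintype.card_fin]

lemma strictMono_val_le {m p : ℕ} {f : Fin m → Fin p} (hf : StrictMono f) :
    ∀ r : Fin m, (r : ℕ) ≤ (f r : ℕ) := by
  have key : ∀ v : ℕ, ∀ r : Fin m, (r : ℕ) ≤ v → (r : ℕ) ≤ (f r : ℕ) := by
    intro v
    induction v with
    | zero => intro r h; omega
    | succ w ih =>
      intro r h
      by_cases hc : (r : ℕ) ≤ w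
      · exact ih r hc
      · have hrv : (r : ℕ) = w + 1 := by omega
        have hw : w < m := by omega
        have hlt : (⟨w, hw⟩ : Fin m) < r := by
          simp [Fin.lt_def, hrv]
        have h1 := hf hlt
        have h2 := ih ⟨w, hw⟩ (le_refl w)
        simp only [Fin.lt_def, Fin.val_mk] at h1 h2
        omega
  exact fun r => key (r : ℕ) r le_rfl

lemma sum_map_castLE {p m : ℕ} (h : m ≤ p) (g : Fin p → ℝ) :
    ∑ i ∈ univ.filter (fun i : Fin p => (i : ℕ) < m), g i
      = ∑ r : Fin m, g (Fin.castLE h r) := by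
  rw [filter_lt_eq_map h, Finset.sum_map]
  rfl

lemma sum_orderEmb {p m : ℕ} (T : Finset (Fin p)) (hT : T.card = m) (g : Fin p → ℝ) :
    ∑ i ∈ T, g i = ∑ r : Fin m, g (T.orderEmbOfFin hT r) := by
  refine (Finset.sum_bij (fun r _ => T.orderEmbOfFin hT r) ?_ ?_ ?_ ?_).symm
  · intro r _; exact Finset.orderEmbOfFin_mem T hT r
  · intro a _ b _ hab; exact (T.orderEmbOfFin hT).injective hab
  · intro j hj
    obtain ⟨r, hr⟩ := (T.orderIsoOfFin hT).surjective ⟨j, hj⟩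
    refine ⟨r, Finset.mem_univ r, ?_⟩
    have := congrArg Subtype.val hr
    simpa [Finset.coe_orderIsoOfFin_apply] using this
  · intro r _; rfl

/-- The trimmed lasso is at most the sum of `|β j|` over any set of `p - k` coordinates. -/
lemma trimmedLasso_le_sum {p : ℕ} (β : Fin p → ℝ) (k : ℕ)
    (S : Finset (Fin p)) (hS : S.card = p - k) :
    trimmedLasso k β ≤ ∑ j ∈ S, |β j| := by
  set m := p - k with hm
  have hmp : m ≤ p := Nat.sub_le p k
  set σ := Tuple.sort (fun j : Fin p => |β j|) with hσ
  set T : Finset (Fin p) := S.image σ.symm with hT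
  have hTcard : T.card = m := by
    rw [hT, Finset.card_image_of_injective _ σ.symm.injective, hS]
  have hsum : ∑ j ∈ S, |β j| = ∑ i ∈ T, sortAbs β i := by
    rw [hT, Finset.sum_image (fun a _ b _ hab => σ.symm.injective hab)]
    refine Finset.sum_congr rfl fun a _ => ?_
    simp [sortAbs, hσ]
  rw [hsum, sum_orderEmb T hTcard, trimmedLasso, sum_map_castLE hmp]
  refine Finset.sum_le_sum fun r _ => ?_
  refine sortAbs_monotone β ?_
  have := strictMono_val_le (T.orderEmbOfFin hTcard).strictMono r
  simpa [Fin.le_def] using this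


lemma trimmedLasso_eq_sum_image {p : ℕ} (β : Fin p → ℝ) (k : ℕ) :
    trimmedLasso k β = ∑ j ∈ (univ.filter fun i : Fin p => (i : ℕ) < p - k).image
      (Tuple.sort (fun j : Fin p => |β j|)), |β j| := by
  rw [Finset.sum_image (fun a _ b _ hab =>
    (Tuple.sort (fun j : Fin p => |β j|)).injective hab)]
  rfl

lemma l0_eq_card_sortAbs {p : ℕ} (β : Fin p → ℝ) :
    l0 β = (univ.filter fun i : Fin p => sortAbs β i ≠ 0).card := by
  set σ := Tuple.sort (fun j : Fin p => |β j|) with hσ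
  have himg : (univ.filter fun j : Fin p => β j ≠ 0)
      = (univ.filter fun i : Fin p => sortAbs β i ≠ 0).image σ := by
    ext j
    simp only [mem_filter, mem_univ, true_and, mem_image]
    constructor
    · intro hj
      exact ⟨σ.symm j, by simpa [sortAbs, hσ] using hj, by simp⟩
    · rintro ⟨i, hi, rfl⟩
      simpa [sortAbs, hσ, abs_ne_zero] using hi
  rw [l0, himg, Finset.card_image_of_injective _ σ.injective]

lemma card_filter_le {p m : ℕ} (h : m ≤ p) :
    (univ.filter fun i : Fin p => m ≤ (i : ℕ)).card = p - m := by
  have h1 := Finset.card_filter_add_card_filter_not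
    (s := (univ : Finset (Fin p))) (p := fun i : Fin p => (i : ℕ) < m)
  have h2 : (univ.filter fun i : Fin p => ¬ (i : ℕ) < m)
      = univ.filter fun i : Fin p => m ≤ (i : ℕ) := by
    apply Finset.filter_congr; intro i _; simp [not_lt]
  rw [h2, card_filter_lt h, Finset.card_univ, Fintype.card_fin] at h1
  omega

lemma l0_ge_of_sortAbs_ne {p : ℕ} (β : Fin p → ℝ) (q : Fin p)
    (hq : sortAbs β q ≠ 0) : p - (q : ℕ) ≤ l0 β := by
  rw [l0_eq_card_sortAbs]
  have hsub : (univ.filter fun i : Fin p => (q : ℕ) ≤ (i : ℕ))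
      ⊆ univ.filter fun i : Fin p => sortAbs β i ≠ 0 := by
    intro i hi
    simp only [mem_filter, mem_univ, true_and] at hi ⊢
    have hmono := sortAbs_monotone β (show q ≤ i from hi)
    have hpos : 0 < sortAbs β q := lt_of_le_of_ne (abs_nonneg _) (Ne.symm hq)
    exact ne_of_gt (lt_of_lt_of_le hpos hmono)
  calc p - (q : ℕ) = (univ.filter fun i : Fin p => (q : ℕ) ≤ (i : ℕ)).card :=
        (card_filter_le (le_of_lt q.2)).symm
    _ ≤ _ := Finset.card_le_card hsub

lemma l0_le_of_sortAbs_zero {p m : ℕ} (β : Fin p → ℝ) (h : m ≤ p)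
    (hz : ∀ i : Fin p, (i : ℕ) < m → sortAbs β i = 0) : l0 β ≤ p - m := by
  rw [l0_eq_card_sortAbs]
  have hsub : (univ.filter fun i : Fin p => sortAbs β i ≠ 0)
      ⊆ univ.filter fun i : Fin p => m ≤ (i : ℕ) := by
    intro i hi
    simp only [mem_filter, mem_univ, true_and, not_lt] at hi ⊢
    by_contra hc
    exact hi (hz i (by omega))
  calc _ ≤ (univ.filter fun i : Fin p => m ≤ (i : ℕ)).card := Finset.card_le_card hsub
    _ = p - m := card_filter_le h

lemma trimmedLasso_nonneg {p : ℕ} (β : Fin p → ℝ) (k : ℕ) : 0 ≤ trimmedLasso k β :=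
  Finset.sum_nonneg fun i _ => abs_nonneg _

lemma trimmedLasso_anti {p : ℕ} (β : Fin p → ℝ) {k k' : ℕ} (h : k ≤ k') :
    trimmedLasso k' β ≤ trimmedLasso k β := by
  refine Finset.sum_le_sum_of_subset_of_nonneg ?_ (fun i _ _ => abs_nonneg _)
  intro i hi
  simp only [mem_filter, mem_univ, true_and] at hi ⊢
  omega

lemma trimmedLasso_eq_zero {p : ℕ} (β : Fin p → ℝ) {k : ℕ} (hk : l0 β ≤ k) :
    trimmedLasso k β = 0 := by
  refine Finset.sum_eq_zero fun i hi => ?_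
  simp only [mem_filter, mem_univ, true_and] at hi
  by_contra hne
  have := l0_ge_of_sortAbs_ne β i hne
  omega

lemma quad_expand {n p : ℕ} (y : Fin n → ℝ) (X : Matrix (Fin n) (Fin p) ℝ)
    (βs : Fin p → ℝ) (i : Fin p) (s : ℝ) :
    (1 / 2) * (∑ j, (y j - X.mulVec (βs + s • (Pi.single i (βs i) : Fin p → ℝ)) j) ^ 2)
      = (1 / 2) * (∑ j, (y j - X.mulVec βs j) ^ 2)
        - s * (∑ j, (y j - X.mulVec βs j) * X.mulVec ((Pi.single i (βs i) : Fin p → ℝ)) j)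
        + s ^ 2 * ((∑ j, (X.mulVec ((Pi.single i (βs i) : Fin p → ℝ)) j) ^ 2) / 2) := by
  have hmv : ∀ j, X.mulVec (βs + s • (Pi.single i (βs i) : Fin p → ℝ)) j
      = X.mulVec βs j + s * X.mulVec ((Pi.single i (βs i) : Fin p → ℝ)) j := by
    intro j
    simp [Matrix.mulVec_add, Matrix.mulVec_smul]
    exact Or.inl (mul_comm _ _)
  have key : ∑ j, (y j - X.mulVec (βs + s • (Pi.single i (βs i) : Fin p → ℝ)) j) ^ 2
      = ∑ j, ((y j - X.mulVec βs j) ^ 2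
          - 2 * s * ((y j - X.mulVec βs j) * X.mulVec ((Pi.single i (βs i) : Fin p → ℝ)) j)
          + s ^ 2 * (X.mulVec ((Pi.single i (βs i) : Fin p → ℝ)) j) ^ 2) := by
    refine Finset.sum_congr rfl fun j _ => ?_
    rw [hmv j]; ring
  rw [key, Finset.sum_add_distrib, Finset.sum_sub_distrib, ← Finset.mul_sum, ← Finset.mul_sum]
  ring


/-- Lemma 4.1(b): if `β*` is optimal for both `(TL_{λ,ℓ})` and
`(TL_{λ,ℓ'})` with `ℓ < ℓ'`, then `‖β*‖₀ ≤ ℓ` and `β*` is optimal for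
`(TL_{λ,j})` for every `j` with `ℓ < j < ℓ'`. -/
theorem tl_optimal_between {n p : ℕ} (y : Fin n → ℝ) (X : Matrix (Fin n) (Fin p) ℝ)
    (lam : ℝ) (hlam : 0 < lam) (ℓ ℓ' : ℕ) (hℓ : ℓ < ℓ') (hℓ' : ℓ' ≤ p)
    (βs : Fin p → ℝ)
    (hopt : ∀ β, tlObj y X lam ℓ βs ≤ tlObj y X lam ℓ β)
    (hopt' : ∀ β, tlObj y X lam ℓ' βs ≤ tlObj y X lam ℓ' β) :
    l0 βs ≤ ℓ ∧ ∀ j : ℕ, ℓ < j → j < ℓ' →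
      ∀ β, tlObj y X lam j βs ≤ tlObj y X lam j β := by
  have hl0p : l0 βs ≤ p := by
    have := Finset.card_filter_le (univ : Finset (Fin p)) (fun i => βs i ≠ 0)
    simpa [l0] using this
  have hl0 : l0 βs ≤ ℓ := by
    by_contra hc
    push_neg at hc
    have hpℓ : ℓ < p := lt_of_lt_of_le hc hl0p
    set q : Fin p := ⟨p - ℓ - 1, by omega⟩ with hq
    have hA : sortAbs βs q ≠ 0 := by
      intro h0
      have hz : ∀ i : Fin p, (i : ℕ) < p - ℓ → sortAbs βs i = 0 := by
        intro i hi
        have hle : i ≤ q := by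
          rw [Fin.le_def]; simp only [hq]; omega
        have h1 := sortAbs_monotone βs hle
        have h2 := abs_nonneg (βs (Tuple.sort (fun j => |βs j|) i))
        rw [h0] at h1
        exact le_antisymm h1 h2
      have := l0_le_of_sortAbs_zero βs (Nat.sub_le p ℓ) hz
      omega
    set σ := Tuple.sort (fun j : Fin p => |βs j|) with hσ
    set i : Fin p := σ q with hi
    have hAβ : βs i ≠ 0 := by
      simpa [sortAbs, hσ, abs_ne_zero] using hA
    have hApos : 0 < |βs i| := abs_pos.2 hAβ
    set A : ℝ := |βs i| with hAdef
    -- the two witness sets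
    set S0 : Finset (Fin p) := (univ.filter fun t : Fin p => (t : ℕ) < p - ℓ).image σ with hS0
    set S1 : Finset (Fin p) := (univ.filter fun t : Fin p => (t : ℕ) < p - ℓ').image σ with hS1
    have hS0card : S0.card = p - ℓ := by
      rw [hS0, Finset.card_image_of_injective _ σ.injective, card_filter_lt (Nat.sub_le _ _)]
    have hS1card : S1.card = p - ℓ' := by
      rw [hS1, Finset.card_image_of_injective _ σ.injective, card_filter_lt (Nat.sub_le _ _)]
    have hiS0 : i ∈ S0 := by
      rw [hS0]
      refine Finset.mem_image.2 ⟨q, ?_, rfl⟩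
      simp only [mem_filter, mem_univ, true_and, hq]
      omega
    have hiS1 : i ∉ S1 := by
      rw [hS1]
      intro hmem
      obtain ⟨t, ht, hti⟩ := Finset.mem_image.1 hmem
      have : t = q := σ.injective hti
      subst this
      simp only [mem_filter, mem_univ, true_and, hq] at ht
      omega
    have hT0 : trimmedLasso ℓ βs = ∑ j ∈ S0, |βs j| := trimmedLasso_eq_sum_image βs ℓ
    have hT1 : trimmedLasso ℓ' βs = ∑ j ∈ S1, |βs j| := trimmedLasso_eq_sum_image βs ℓ'
    -- perturbation data
    set u : Fin n → ℝ := X.mulVec (Pi.single i (βs i) : Fin p → ℝ) with hu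
    set C : ℝ := ∑ j, (y j - X.mulVec βs j) * u j with hC
    set D : ℝ := ∑ j, (u j) ^ 2 with hD
    have hDnn : 0 ≤ D := Finset.sum_nonneg fun j _ => sq_nonneg _
    have hexp : ∀ s : ℝ,
        (1 / 2) * (∑ j, (y j - X.mulVec (βs + s • (Pi.single i (βs i) : Fin p → ℝ)) j) ^ 2)
          = (1 / 2) * (∑ j, (y j - X.mulVec βs j) ^ 2) - s * C + s ^ 2 * (D / 2) :=
      fun s => quad_expand y X βs i s
    have hpert_ne : ∀ (s : ℝ) (j : Fin p), j ≠ i →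
        (βs + s • (Pi.single i (βs i) : Fin p → ℝ)) j = βs j := by
      intro s j hj
      simp [Pi.single_eq_of_ne hj]
    have hpert_i : ∀ s : ℝ,
        (βs + s • (Pi.single i (βs i) : Fin p → ℝ)) i = (1 + s) * βs i := by
      intro s
      simp [Pi.single_eq_same]
      ring
    -- penalty bound going down
    have hdown : ∀ s : ℝ, 0 < s → s ≤ 1 →
        trimmedLasso ℓ (βs + (-s) • (Pi.single i (βs i) : Fin p → ℝ))
          ≤ trimmedLasso ℓ βs - s * A := by
      intro s hs hs1
      have h1 := trimmedLasso_le_sum (βs + (-s) • (Pi.single i (βs i) : Fin p → ℝ)) ℓ S0 hS0card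
      have he : ∑ j ∈ S0.erase i, |(βs + (-s) • (Pi.single i (βs i) : Fin p → ℝ)) j|
          = ∑ j ∈ S0.erase i, |βs j| :=
        Finset.sum_congr rfl fun j hj => by rw [hpert_ne (-s) j (Finset.ne_of_mem_erase hj)]
      have habs : |(βs + (-s) • (Pi.single i (βs i) : Fin p → ℝ)) i| = (1 - s) * A := by
        rw [hpert_i (-s), abs_mul, hAdef, abs_of_nonneg (by linarith : (0:ℝ) ≤ 1 + -s)]
        ring
      have h2 : ∑ j ∈ S0, |(βs + (-s) • (Pi.single i (βs i) : Fin p → ℝ)) j|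
          = ∑ j ∈ S0, |βs j| - s * A := by
        rw [← Finset.add_sum_erase _ _ hiS0, ← Finset.add_sum_erase _ _ hiS0, he, habs]
        ring
      rw [hT0]
      linarith [h1, h2.le, h2.ge]
    -- penalty bound going up
    have hup : ∀ s : ℝ,
        trimmedLasso ℓ' (βs + s • (Pi.single i (βs i) : Fin p → ℝ))
          ≤ trimmedLasso ℓ' βs := by
      intro s
      have h1 := trimmedLasso_le_sum (βs + s • (Pi.single i (βs i) : Fin p → ℝ)) ℓ' S1 hS1card
      have h2 : ∑ j ∈ S1, |(βs + s • (Pi.single i (βs i) : Fin p → ℝ)) j|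
          = ∑ j ∈ S1, |βs j| :=
        Finset.sum_congr rfl fun j hj => by
          rw [hpert_ne s j (fun h => hiS1 (h ▸ hj))]
      rw [hT1]
      linarith [h1, h2.le]
    -- from optimality at ℓ' : C ≤ s*D/2 for all s > 0
    have hup2 : ∀ s : ℝ, 0 < s → 2 * C ≤ s * D := by
      intro s hs
      have h := hopt' (βs + s • (Pi.single i (βs i) : Fin p → ℝ))
      simp only [tlObj] at h
      rw [hexp s] at h
      have h2 := mul_le_mul_of_nonneg_left (hup s) (le_of_lt hlam)
      have h3 : 0 ≤ - s * C + s ^ 2 * (D / 2) := by linarith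
      have h4 : s * (2 * C) ≤ s * (s * D) := by nlinarith
      exact le_of_mul_le_mul_left h4 hs
    have hCle : C ≤ 0 := by
      by_contra hCpos
      push_neg at hCpos
      rcases eq_or_lt_of_le hDnn with hD0 | hDpos
      · have := hup2 1 one_pos
        rw [← hD0] at this
        linarith
      · have := hup2 (C / D) (div_pos hCpos hDpos)
        rw [div_mul_cancel₀ _ (ne_of_gt hDpos)] at this
        linarith
    -- from optimality at ℓ : lam * A ≤ C + s*D/2 for s ∈ (0,1]
    have hdown2 : ∀ s : ℝ, 0 < s → s ≤ 1 → s * (lam * A) ≤ s * C + s ^ 2 * (D / 2) := by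
      intro s hs hs1
      have h := hopt (βs + (-s) • (Pi.single i (βs i) : Fin p → ℝ))
      simp only [tlObj] at h
      rw [hexp (-s)] at h
      have h2 := mul_le_mul_of_nonneg_left (hdown s hs hs1) (le_of_lt hlam)
      nlinarith
    -- contradiction
    have hlA : 0 < lam * A := mul_pos hlam hApos
    set s0 : ℝ := min 1 (lam * A / (D + 1)) with hs0
    have hs0pos : 0 < s0 := lt_min one_pos (div_pos hlA (by linarith))
    have hs0le1 : s0 ≤ 1 := min_le_left _ _
    have hs0le : s0 * (D + 1) ≤ lam * A := by
      have h1 : s0 ≤ lam * A / (D + 1) := min_le_right _ _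
      have h2 : (0:ℝ) < D + 1 := by linarith
      calc s0 * (D + 1) ≤ (lam * A / (D + 1)) * (D + 1) :=
            mul_le_mul_of_nonneg_right h1 (le_of_lt h2)
        _ = lam * A := div_mul_cancel₀ _ (ne_of_gt h2)
    have hkey := hdown2 s0 hs0pos hs0le1
    -- s0 * (lam*A) ≤ s0*C + s0^2 * D/2 ≤ s0^2*D/2 ≤ s0*(lam*A)/2
    nlinarith [mul_nonneg (le_of_lt hs0pos) (neg_nonneg.2 hCle),
      mul_le_mul_of_nonneg_left hs0le (le_of_lt hs0pos), sq_nonneg s0]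
  refine ⟨hl0, fun j hj1 hj2 β => ?_⟩
  have hTℓ' : trimmedLasso ℓ' βs = 0 := trimmedLasso_eq_zero βs (by omega)
  have hTj : trimmedLasso j βs = 0 := trimmedLasso_eq_zero βs (by omega)
  have h1 : tlObj y X lam j βs = tlObj y X lam ℓ' βs := by
    simp only [tlObj, hTj, hTℓ']
  have h2 := hopt' β
  have h3 : tlObj y X lam ℓ' β ≤ tlObj y X lam j β := by
    simp only [tlObj]
    have := trimmedLasso_anti β (le_of_lt hj2)
    have := mul_le_mul_of_nonneg_left this (le_of_lt hlam)
    linarith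
  linarith
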